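/- Let F ⊆ P([n]) be an increasing family and 0 < p < 1. Then p · I^p(F) ≥ μ_p(F) · log_p(μ_p(F)), where I^p(F) is the total influence of F with respect to μ_p. -/

import Mathlib

open Finset
open scoped Classical

noncomputable def biasedMeasure (p : ℝ) (n : ℕ) (F : Finset (Finset (Fin n))) : ℝ :=
  ∑ A ∈ F, p ^ A.card * (1 - p) ^ (n - A.card)

/-- The set of i-influential elements of F. -/
noncomputable def influentialSet (n : ℕ) (F : Finset (Finset (Fin n))) (i : Fin n) :
    Finset (Finset (Fin n)) :=
  Finset.univ.filter (fun S => Xor' (S ∈ F) (symmDiff S {i} ∈ F))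

namespace BiasedIso

/-- embed a subset of `Fin n` into `Fin (n+1)` -/
noncomputable def emb (n : ℕ) (T : Finset (Fin n)) : Finset (Fin (n + 1)) :=
  T.image Fin.castSucc

lemma last_not_mem (n : ℕ) (T : Finset (Fin n)) : Fin.last n ∉ emb n T := by
  simp only [emb, Finset.mem_image, not_exists]
  intro a
  rintro ⟨-, h⟩
  exact Fin.ne_of_lt (Fin.castSucc_lt_last a) h

lemma emb_inj (n : ℕ) : Function.Injective (emb n) := fun a b h => by
  have := Finset.image_injective (Fin.castSucc_injective n)
  exact this h

noncomputable def g (n : ℕ) : Finset (Fin n) × Bool → Finset (Fin (n + 1)) :=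
  fun x => if x.2 then insert (Fin.last n) (emb n x.1) else emb n x.1

lemma g_bij (n : ℕ) : Function.Bijective (g n) := by
  rw [Fintype.bijective_iff_injective_and_card]
  constructor
  · rintro ⟨T, b⟩ ⟨T', b'⟩ h
    simp only [g] at h
    cases b <;> cases b' <;> simp only [Bool.false_eq_true, if_true, if_false, reduceIte] at h
    · exact Prod.ext (emb_inj n h) rfl
    · exfalso; apply last_not_mem n T; rw [h]; exact Finset.mem_insert_self _ _
    · exfalso; apply last_not_mem n T'; rw [← h]; exact Finset.mem_insert_self _ _
    · have h2 := congrArg (fun s => Finset.erase s (Fin.last n)) h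
      simp only [Finset.erase_insert (last_not_mem n T), Finset.erase_insert (last_not_mem n T')]
        at h2
      exact Prod.ext (emb_inj n h2) rfl
  · simp [Fintype.card_finset]
    ring

lemma sum_split (n : ℕ) (h : Finset (Fin (n + 1)) → ℝ) :
    ∑ S : Finset (Fin (n + 1)), h S =
      ∑ T : Finset (Fin n), h (emb n T) +
        ∑ T : Finset (Fin n), h (insert (Fin.last n) (emb n T)) := by
  rw [← Fintype.sum_bijective (g n) (g_bij n) _ h (fun x => rfl)]
  rw [Fintype.sum_prod_type]
  have : ∀ T : Finset (Fin n), ∑ b : Bool, h (g n (T, b))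
      = h (emb n T) + h (insert (Fin.last n) (emb n T)) := by
    intro T
    rw [Fintype.sum_bool]
    simp [g, add_comm]
  rw [Finset.sum_congr rfl fun T _ => this T, Finset.sum_add_distrib]

lemma measure_eq_sum_ite (p : ℝ) (n : ℕ) (F : Finset (Finset (Fin n))) :
    biasedMeasure p n F =
      ∑ S : Finset (Fin n), if S ∈ F then p ^ S.card * (1 - p) ^ (n - S.card) else 0 := by
  rw [Finset.sum_ite_mem, Finset.univ_inter]
  rfl

noncomputable def slice0 (n : ℕ) (F : Finset (Finset (Fin (n + 1)))) : Finset (Finset (Fin n)) :=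
  univ.filter (fun T => emb n T ∈ F)

noncomputable def slice1 (n : ℕ) (F : Finset (Finset (Fin (n + 1)))) : Finset (Finset (Fin n)) :=
  univ.filter (fun T => insert (Fin.last n) (emb n T) ∈ F)

lemma mem_slice0 {n : ℕ} {F : Finset (Finset (Fin (n + 1)))} {T : Finset (Fin n)} :
    T ∈ slice0 n F ↔ emb n T ∈ F := by simp [slice0]

lemma mem_slice1 {n : ℕ} {F : Finset (Finset (Fin (n + 1)))} {T : Finset (Fin n)} :
    T ∈ slice1 n F ↔ insert (Fin.last n) (emb n T) ∈ F := by simp [slice1]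

lemma card_emb (n : ℕ) (T : Finset (Fin n)) : (emb n T).card = T.card :=
  Finset.card_image_of_injective _ (Fin.castSucc_injective n)

lemma card_le (n : ℕ) (T : Finset (Fin n)) : T.card ≤ n := by
  simpa using Finset.card_le_univ T

lemma w_emb (p : ℝ) (n : ℕ) (T : Finset (Fin n)) :
    p ^ (emb n T).card * (1 - p) ^ (n + 1 - (emb n T).card)
      = (1 - p) * (p ^ T.card * (1 - p) ^ (n - T.card)) := by
  rw [card_emb]
  have h : n + 1 - T.card = (n - T.card) + 1 := by have := card_le n T; omega
  rw [h, pow_succ]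
  ring

lemma w_insert (p : ℝ) (n : ℕ) (T : Finset (Fin n)) :
    p ^ (insert (Fin.last n) (emb n T)).card *
        (1 - p) ^ (n + 1 - (insert (Fin.last n) (emb n T)).card)
      = p * (p ^ T.card * (1 - p) ^ (n - T.card)) := by
  rw [Finset.card_insert_of_notMem (last_not_mem n T), card_emb]
  have h : n + 1 - (T.card + 1) = n - T.card := by omega
  rw [h, pow_succ]
  ring

lemma measure_split (p : ℝ) (n : ℕ) (F : Finset (Finset (Fin (n + 1)))) :
    biasedMeasure p (n + 1) F =
      (1 - p) * biasedMeasure p n (slice0 n F) + p * biasedMeasure p n (slice1 n F) := by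
  rw [measure_eq_sum_ite, sum_split, measure_eq_sum_ite p n (slice0 n F),
    measure_eq_sum_ite p n (slice1 n F), Finset.mul_sum, Finset.mul_sum]
  congr 1
  · apply Finset.sum_congr rfl
    intro T _
    by_cases h : emb n T ∈ F
    · rw [if_pos h, if_pos (mem_slice0.2 h), w_emb]
    · rw [if_neg h, if_neg (fun hc => h (mem_slice0.1 hc)), mul_zero]
  · apply Finset.sum_congr rfl
    intro T _
    by_cases h : insert (Fin.last n) (emb n T) ∈ F
    · rw [if_pos h, if_pos (mem_slice1.2 h), w_insert]
    · rw [if_neg h, if_neg (fun hc => h (mem_slice1.1 hc)), mul_zero]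

lemma symm_emb (n : ℕ) (T : Finset (Fin n)) (j : Fin n) :
    symmDiff (emb n T) {j.castSucc} = emb n (symmDiff T {j}) := by
  rw [emb, emb, Finset.image_symmDiff _ _ (Fin.castSucc_injective n), Finset.image_singleton]

lemma symm_insert (n : ℕ) (T : Finset (Fin n)) (j : Fin n) :
    symmDiff (insert (Fin.last n) (emb n T)) {j.castSucc}
      = insert (Fin.last n) (emb n (symmDiff T {j})) := by
  ext x
  simp only [Finset.mem_symmDiff, Finset.mem_insert, Finset.mem_singleton]
  by_cases hx : x = Fin.last n
  · subst hx
    have h1 : (Fin.last n : Fin (n + 1)) ≠ j.castSucc :=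
      fun h => Fin.ne_of_lt (Fin.castSucc_lt_last j) h.symm
    simp [h1]
  · have h2 : x ∈ symmDiff (emb n T) {j.castSucc} ↔ x ∈ emb n (symmDiff T {j}) := by
      rw [symm_emb]
    simp only [Finset.mem_symmDiff, Finset.mem_singleton] at h2
    simp only [hx, false_or]
    tauto

lemma symm_last0 (n : ℕ) (T : Finset (Fin n)) :
    symmDiff (emb n T) {Fin.last n} = insert (Fin.last n) (emb n T) := by
  ext x
  simp only [Finset.mem_symmDiff, Finset.mem_insert, Finset.mem_singleton]
  constructor
  · rintro (⟨h1, h2⟩ | ⟨h1, -⟩)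
    · exact Or.inr h1
    · exact Or.inl h1
  · rintro (h | h)
    · subst h; exact Or.inr ⟨rfl, last_not_mem n T⟩
    · refine Or.inl ⟨h, fun hc => ?_⟩
      subst hc; exact last_not_mem n T h

lemma symm_last1 (n : ℕ) (T : Finset (Fin n)) :
    symmDiff (insert (Fin.last n) (emb n T)) {Fin.last n} = emb n T := by
  ext x
  simp only [Finset.mem_symmDiff, Finset.mem_insert, Finset.mem_singleton]
  constructor
  · rintro (⟨h1, h2⟩ | ⟨h1, h2⟩)
    · rcases h1 with h1 | h1
      · exact absurd h1 h2
      · exact h1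
    · exact absurd (Or.inl h1) h2
  · intro h
    refine Or.inl ⟨Or.inr h, fun hc => ?_⟩
    subst hc; exact last_not_mem n T h

lemma slice0_infl (n : ℕ) (F : Finset (Finset (Fin (n + 1)))) (j : Fin n) :
    slice0 n (influentialSet (n + 1) F j.castSucc) = influentialSet n (slice0 n F) j := by
  ext T
  simp only [mem_slice0, influentialSet, Finset.mem_filter, Finset.mem_univ, true_and,
    symm_emb, mem_slice0]

lemma slice1_infl (n : ℕ) (F : Finset (Finset (Fin (n + 1)))) (j : Fin n) :
    slice1 n (influentialSet (n + 1) F j.castSucc) = influentialSet n (slice1 n F) j := by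
  ext T
  simp only [mem_slice1, influentialSet, Finset.mem_filter, Finset.mem_univ, true_and,
    symm_insert, mem_slice1]

lemma slice0_infl_last (n : ℕ) (F : Finset (Finset (Fin (n + 1))))
    (hsub : slice0 n F ⊆ slice1 n F) :
    slice0 n (influentialSet (n + 1) F (Fin.last n)) = slice1 n F \ slice0 n F := by
  ext T
  have h := @hsub T
  rw [mem_slice0] at h
  rw [mem_slice1] at h
  rw [Finset.mem_sdiff, mem_slice0, mem_slice1, mem_slice0]
  rw [influentialSet, Finset.mem_filter]
  rw [symm_last0]
  simp only [Finset.mem_univ, true_and, Xor', xor_def]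
  tauto

lemma slice1_infl_last (n : ℕ) (F : Finset (Finset (Fin (n + 1))))
    (hsub : slice0 n F ⊆ slice1 n F) :
    slice1 n (influentialSet (n + 1) F (Fin.last n)) = slice1 n F \ slice0 n F := by
  ext T
  have h := @hsub T
  rw [mem_slice0] at h
  rw [mem_slice1] at h
  rw [Finset.mem_sdiff, mem_slice1, mem_slice1, mem_slice0]
  rw [influentialSet, Finset.mem_filter]
  rw [symm_last1]
  simp only [Finset.mem_univ, true_and, Xor', xor_def]
  tauto

section Increasing
variable {n : ℕ} {F : Finset (Finset (Fin (n + 1)))}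
  (hinc : ∀ A B : Finset (Fin (n + 1)), B ∈ F → B ⊆ A → A ∈ F)

include hinc

lemma slice_sub : slice0 n F ⊆ slice1 n F := by
  intro T hT
  rw [mem_slice1]
  exact hinc _ _ (mem_slice0.1 hT) (Finset.subset_insert _ _)

lemma slice0_inc : ∀ A B : Finset (Fin n), B ∈ slice0 n F → B ⊆ A → A ∈ slice0 n F := by
  intro A B hB hBA
  rw [mem_slice0]
  exact hinc _ _ (mem_slice0.1 hB) (Finset.image_subset_image hBA)

lemma slice1_inc : ∀ A B : Finset (Fin n), B ∈ slice1 n F → B ⊆ A → A ∈ slice1 n F := by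
  intro A B hB hBA
  rw [mem_slice1]
  exact hinc _ _ (mem_slice1.1 hB)
    (Finset.insert_subset_insert _ (Finset.image_subset_image hBA))

end Increasing

lemma measure_nonneg {p : ℝ} (hp : 0 ≤ p) (hp1 : p ≤ 1) (n : ℕ)
    (F : Finset (Finset (Fin n))) : 0 ≤ biasedMeasure p n F := by
  apply Finset.sum_nonneg
  intro A _
  exact mul_nonneg (pow_nonneg hp _) (pow_nonneg (by linarith) _)

lemma measure_mono {p : ℝ} (hp : 0 ≤ p) (hp1 : p ≤ 1) {n : ℕ}
    {F G : Finset (Finset (Fin n))} (h : F ⊆ G) :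
    biasedMeasure p n F ≤ biasedMeasure p n G := by
  apply Finset.sum_le_sum_of_subset_of_nonneg h
  intro A _ _
  exact mul_nonneg (pow_nonneg hp _) (pow_nonneg (by linarith) _)

lemma measure_univ (p : ℝ) (n : ℕ) :
    biasedMeasure p n (univ : Finset (Finset (Fin n))) = 1 := by
  have key := Finset.prod_add (fun _ : Fin n => p) (fun _ : Fin n => 1 - p) (univ : Finset (Fin n))
  simp only [Finset.prod_const, Finset.powerset_univ] at key
  have hc : ∀ t : Finset (Fin n), ((univ : Finset (Fin n)) \ t).card = n - t.card := by
    intro t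
    rw [Finset.card_sdiff_of_subset (Finset.subset_univ t), Finset.card_univ, Fintype.card_fin]
  calc biasedMeasure p n univ
      = ∑ t : Finset (Fin n), p ^ t.card * (1 - p) ^ ((univ : Finset (Fin n)) \ t).card := by
        apply Finset.sum_congr rfl; intro t _; rw [hc]
    _ = (p + (1 - p)) ^ (univ : Finset (Fin n)).card := key.symm
    _ = 1 := by rw [Finset.card_univ, Fintype.card_fin]; norm_num

lemma measure_le_one {p : ℝ} (hp : 0 ≤ p) (hp1 : p ≤ 1) (n : ℕ)
    (F : Finset (Finset (Fin n))) : biasedMeasure p n F ≤ 1 := by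
  calc biasedMeasure p n F ≤ biasedMeasure p n univ :=
        measure_mono hp hp1 (Finset.subset_univ F)
    _ = 1 := measure_univ p n

lemma key_mul (p a b : ℝ) (hp : 0 < p) (hp1 : p < 1) (ha : 0 ≤ a) (hab : a ≤ b) :
    (1 - p) * (a * Real.log a) + p * (b * Real.log b) + p * (b - a) * Real.log p
      ≤ ((1 - p) * a + p * b) * Real.log ((1 - p) * a + p * b) := by
  rcases eq_or_lt_of_le (ha.trans hab) with hb | hb
  · have hb0 : b = 0 := hb.symm
    have ha0 : a = 0 := le_antisymm (hab.trans_eq hb0) ha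
    subst hb0; subst ha0
    simp
  · set m := (1 - p) * a + p * b with hm
    have hp' : (0:ℝ) ≤ 1 - p := by linarith
    have ham : a ≤ m := by nlinarith
    have hm0 : 0 < m := by nlinarith
    have h1 : a * Real.log a ≤ a * Real.log m := by
      rcases ha.eq_or_lt with h | h
      · simp [← h]
      · exact mul_le_mul_of_nonneg_left (Real.log_le_log h ham) ha
    have ht0 : 0 ≤ a / b := div_nonneg ha hb.le
    have ht1 : a / b ≤ 1 := (div_le_one hb).2 hab
    have hconv := convexOn_exp.2 (Set.mem_univ (Real.log p)) (Set.mem_univ (0:ℝ))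
      (by linarith : (0:ℝ) ≤ 1 - a / b) ht0 (by ring)
    simp only [smul_eq_mul, Real.exp_log hp, Real.exp_zero, mul_zero, add_zero, mul_one] at hconv
    have hs : Real.exp ((1 - a / b) * Real.log p) ≤ m / b := by
      have he : (1 - a / b) * p + a / b = m / b := by
        field_simp
        ring
      linarith [hconv, he.ge]
    have hlog : (1 - a / b) * Real.log p ≤ Real.log (m / b) :=
      (Real.le_log_iff_exp_le (by positivity)).2 hs
    have hmdiv : Real.log (m / b) = Real.log m - Real.log b := Real.log_div hm0.ne' hb.ne'
    have h2 : (b - a) * Real.log p ≤ b * Real.log m - b * Real.log b := by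
      have hh := mul_le_mul_of_nonneg_left hlog hb.le
      rw [hmdiv] at hh
      have he2 : b * ((1 - a / b) * Real.log p) = (b - a) * Real.log p := by
        have hb' : b * (1 - a / b) = b - a := by field_simp
        calc b * ((1 - a / b) * Real.log p) = b * (1 - a / b) * Real.log p := by ring
          _ = (b - a) * Real.log p := by rw [hb']
      nlinarith [hh]
    have e : m * Real.log m = (1 - p) * (a * Real.log m) + p * (b * Real.log m) := by
      rw [hm]; ring
    nlinarith [mul_le_mul_of_nonneg_left h1 hp', mul_le_mul_of_nonneg_left h2 hp.le]

theorem aux (p : ℝ) (hp : 0 < p) (hp1 : p < 1) :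
    ∀ (n : ℕ) (F : Finset (Finset (Fin n))),
      (∀ A B : Finset (Fin n), B ∈ F → B ⊆ A → A ∈ F) →
      (p * ∑ i : Fin n, biasedMeasure p n (influentialSet n F i)) * Real.log p
        ≤ biasedMeasure p n F * Real.log (biasedMeasure p n F) := by
  intro n
  induction n with
  | zero =>
    intro F _
    have hx : ∀ x : Finset (Fin 0), x = ∅ :=
      fun x => Finset.eq_empty_of_forall_notMem (fun a _ => a.elim0)
    have hFsub : F ⊆ {∅} := fun x hx' => by rw [hx x]; exact Finset.mem_singleton_self _
    rcases Finset.subset_singleton_iff.1 hFsub with h | h <;> subst h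
    · simp [biasedMeasure]
    · simp [biasedMeasure]
  | succ n IH =>
    intro F hinc
    set F0 := slice0 n F with hF0
    set F1 := slice1 n F with hF1
    have hsub : F0 ⊆ F1 := slice_sub hinc
    have IH0 := IH F0 (slice0_inc hinc)
    have IH1 := IH F1 (slice1_inc hinc)
    set μ0 := biasedMeasure p n F0 with hμ0
    set μ1 := biasedMeasure p n F1 with hμ1
    have hμsplit : biasedMeasure p (n + 1) F = (1 - p) * μ0 + p * μ1 := measure_split p n F
    have hinfl : ∀ j : Fin n,
        biasedMeasure p (n + 1) (influentialSet (n + 1) F j.castSucc)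
          = (1 - p) * biasedMeasure p n (influentialSet n F0 j)
            + p * biasedMeasure p n (influentialSet n F1 j) := by
      intro j
      rw [measure_split, slice0_infl, slice1_infl]
    have hlast : biasedMeasure p (n + 1) (influentialSet (n + 1) F (Fin.last n)) = μ1 - μ0 := by
      rw [measure_split, slice0_infl_last n F hsub, slice1_infl_last n F hsub]
      have hd : biasedMeasure p n (F1 \ F0) = μ1 - μ0 := Finset.sum_sdiff_eq_sub hsub
      rw [hd]; ring
    rw [Fin.sum_univ_castSucc, hlast, Finset.sum_congr rfl (fun j _ => hinfl j),
      Finset.sum_add_distrib, ← Finset.mul_sum, ← Finset.mul_sum, hμsplit]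
    set S0 := ∑ i : Fin n, biasedMeasure p n (influentialSet n F0 i) with hS0
    set S1 := ∑ i : Fin n, biasedMeasure p n (influentialSet n F1 i) with hS1
    have hμ0n : 0 ≤ μ0 := measure_nonneg hp.le hp1.le n F0
    have hμ01 : μ0 ≤ μ1 := measure_mono hp.le hp1.le hsub
    have key := key_mul p μ0 μ1 hp hp1 hμ0n hμ01
    have hL : Real.log p < 0 := Real.log_neg hp hp1
    nlinarith [mul_le_mul_of_nonneg_left IH0 (show (0:ℝ) ≤ 1 - p by linarith),
      mul_le_mul_of_nonneg_left IH1 hp.le]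

end BiasedIso

/-- Isoperimetric inequality: p·I^p(F) ≥ μ_p(F)·log_p(μ_p(F)) for increasing F. -/
theorem biased_isoperimetric (n : ℕ) (p : ℝ) (hp : 0 < p) (hp1 : p < 1)
    (F : Finset (Finset (Fin n)))
    (hinc : ∀ A B : Finset (Fin n), B ∈ F → B ⊆ A → A ∈ F) :
    biasedMeasure p n F * (Real.log (biasedMeasure p n F) / Real.log p) ≤
      p * ∑ i : Fin n, biasedMeasure p n (influentialSet n F i) := by
  rw [← mul_div_assoc, div_le_iff_of_neg (Real.log_neg hp hp1)]
  exact BiasedIso.aux p hp hp1 n F hinc
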